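/- arXiv:1806.06531 — 2 statements merged into one kernel-verified Lean document; each statement's English description precedes it below -/
import Mathlib

section
/- Theorem 3.1 (main theorem): Let k be a commutative ring with unit and n ≥ 0. There is an isomorphism of k-algebras φ : kC_{n+1} → I(P_n, k) between the monoid algebra of the Catalan monoid C_{n+1} over k and the incidence algebra of the poset P_n over k, given on basis elements by φ(f) = Σ_{S ∈ PCS(f)} (S, f(S)). -/
/-- `X ≤ Y` in the poset `Pₙ`: writing `X = {x₁ < ⋯ < x_k}` and `Y = {y₁ < ⋯ < y_l}`,
we require `k = l` and `xᵢ ≤ yᵢ` for all `i` (encoded via `List.Forall₂` on the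
sorted enumerations, which forces in particular `|X| = |Y|`). -/
def Ple {α : Type*} [LinearOrder α] (X Y : Finset α) : Prop :=
  List.Forall₂ (· ≤ ·) (X.sort (· ≤ ·)) (Y.sort (· ≤ ·))

/-- `S` is a partial cross-section of `f : [n+1] → [n+1]`: `S ⊆ [n]`
(i.e. `n+1 ∉ S`, with `n+1` modelled as `Fin.last n`), `n+1 ∉ f(S)`, and `f`
restricted to `S` is injective. -/
def PCS {n : ℕ} (f : Fin (n+1) → Fin (n+1)) : Set (Finset (Fin (n+1))) :=
  {S | Fin.last n ∉ S ∧ Fin.last n ∉ S.image f ∧ Set.InjOn f ↑S}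

/-- The Catalan monoid `Cₙ`: the submonoid of self-maps of `[n]` (modelled as `Fin n`),
under composition (`f * g = f ∘ g`), consisting of the order-preserving, weakly
increasing maps. -/
def catalanMonoid (n : ℕ) : Submonoid (Function.End (Fin n)) where
  carrier := {f | Monotone f ∧ ∀ i, i ≤ f i}
  one_mem' := ⟨monotone_id, fun _ => le_rfl⟩
  mul_mem' := fun hf hg => ⟨hf.1.comp hg.1, fun i => le_trans (hg.2 i) (hf.2 _)⟩

/-- The poset `Pₙ` of subsets of `[n]`, viewed inside `[n+1]`: finsets of
`Fin (n+1)` avoiding the top element `Fin.last n`. -/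
abbrev Pn (n : ℕ) := {S : Finset (Fin (n+1)) // Fin.last n ∉ S}

theorem Ple.refl {α : Type*} [LinearOrder α] (X : Finset α) : Ple X X :=
  List.forall₂_same.2 fun _ _ => le_rfl

theorem forall₂_le_trans {α : Type*} [Preorder α] :
    ∀ {l₁ l₂ l₃ : List α}, List.Forall₂ (· ≤ ·) l₁ l₂ → List.Forall₂ (· ≤ ·) l₂ l₃ →
      List.Forall₂ (· ≤ ·) l₁ l₃
  | _, _, _, List.Forall₂.nil, List.Forall₂.nil => List.Forall₂.nil
  | _, _, _, List.Forall₂.cons h₁ t₁, List.Forall₂.cons h₂ t₂ =>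
      List.Forall₂.cons (le_trans h₁ h₂) (forall₂_le_trans t₁ t₂)

theorem Ple.trans {α : Type*} [LinearOrder α] {X Y Z : Finset α}
    (h₁ : Ple X Y) (h₂ : Ple Y Z) : Ple X Z :=
  forall₂_le_trans h₁ h₂

/-- The incidence algebra `I(Pₙ, k)`: the free `k`-module on the ordered pairs
`(X, Y)` with `X ≤ Y` in `Pₙ`, with product `(U,V)(X,Y) = (X,V)` if `Y = U` and `0`
otherwise.  It is realised concretely as the `k`-subalgebra of matrices `M` indexed by
`Pₙ` such that `M Y X = 0` unless `X ≤ Y`, the basis pair `(X, Y)` being the matrix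
unit `stdBasisMatrix Y X 1`; indeed `E_{V,U} • E_{Y,X} = [U = Y] • E_{V,X}`,
which is exactly the required product of `(U,V)` and `(X,Y)`. -/
noncomputable def IncAlg (n : ℕ) (k : Type*) [CommRing k] :
    Subalgebra k (Matrix (Pn n) (Pn n) k) where
  carrier := {M | ∀ X Y : Pn n, ¬ Ple X.1 Y.1 → M Y X = 0}
  zero_mem' := fun _ _ _ => rfl
  add_mem' := fun {M N} hM hN X Y h => by
    simp only [Matrix.add_apply, hM X Y h, hN X Y h, add_zero]
  one_mem' := fun X Y h => by
    rw [Matrix.one_apply]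
    split
    · next heq => exact absurd (heq ▸ Ple.refl X.1) h
    · rfl
  mul_mem' := fun {M N} hM hN X Y h => by
    rw [Matrix.mul_apply]
    refine Finset.sum_eq_zero fun Z _ => ?_
    by_cases h₁ : Ple Z.1 Y.1
    · by_cases h₂ : Ple X.1 Z.1
      · exact absurd (Ple.trans h₂ h₁) h
      · rw [hN X Z h₂, mul_zero]
    · rw [hM Z Y h₁, zero_mul]
  algebraMap_mem' := fun r X Y h => by
    rw [Matrix.algebraMap_matrix_apply]
    split
    · next heq => exact absurd (heq ▸ Ple.refl X.1) h
    · rfl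

open Classical in
/-- The pair `(S, f(S))` as an element of `Pₙ × Pₙ` (junk value if `n+1 ∈ f(S)`,
which never happens for `S ∈ PCS f`). -/
noncomputable def imageP {n : ℕ} (f : Fin (n+1) → Fin (n+1)) (P : Pn n) : Pn n :=
  if h : Fin.last n ∉ P.1.image f then ⟨P.1.image f, h⟩ else P

open Classical in
/-- `φ(f) = ∑_{S ∈ PCS(f)} (S, f(S))`, where the basis pair `(S, f(S))` of
`I(Pₙ, k)` is the matrix unit with `1` in row `f(S)`, column `S`. -/
noncomputable def phi (n : ℕ) (k : Type*) [CommRing k] (f : Fin (n+1) → Fin (n+1)) :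
    Matrix (Pn n) (Pn n) k :=
  ∑ P ∈ Finset.univ.filter (fun P : Pn n => P.1 ∈ PCS f),
    Matrix.single (imageP f P) P (1 : k)

/-! ### Auxiliary list lemmas -/

theorem forall₂_of_map_eq {α β : Type*} {f g : α → β} {R : α → α → Prop} :
    ∀ {l₁ l₂ : List α}, l₁.map f = l₂.map g →
      (∀ a ∈ l₁, ∀ b ∈ l₂, f a = g b → R a b) → List.Forall₂ R l₁ l₂
  | [], [], _, _ => .nil
  | [], _ :: _, h, _ => by simp at h
  | _ :: _, [], h, _ => by simp at h
  | a :: s, b :: t, h, H => by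
    simp only [List.map_cons, List.cons.injEq] at h
    exact .cons (H a (by simp) b (by simp) h.1)
      (forall₂_of_map_eq h.2 fun a ha b hb => H a (by simp [ha]) b (by simp [hb]))

theorem map_eq_pointwise {α β : Type*} {f g : α → β} :
    ∀ {l : List α}, l.map f = l.map g → ∀ x ∈ l, f x = g x
  | [], _, x, hx => absurd hx List.not_mem_nil
  | a :: t, h, x, hx => by
    simp only [List.map_cons, List.cons.injEq] at h
    rcases List.mem_cons.1 hx with rfl | hx
    · exact h.1
    · exact map_eq_pointwise h.2 x hx

theorem forall₂_sum_le : ∀ {l₁ l₂ : List ℕ}, List.Forall₂ (· ≤ ·) l₁ l₂ → l₁.sum ≤ l₂.sum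
  | _, _, .nil => le_rfl
  | _, _, .cons h t => by
    simpa using Nat.add_le_add h (forall₂_sum_le t)

theorem forall₂_sum_eq : ∀ {l₁ l₂ : List ℕ}, List.Forall₂ (· ≤ ·) l₁ l₂ →
    l₁.sum = l₂.sum → l₁ = l₂
  | _, _, .nil, _ => rfl
  | a :: _, b :: _, .cons h t, hs => by
    simp only [List.sum_cons] at hs
    have hle := forall₂_sum_le t
    have hab : a = b := by omega
    rw [hab, forall₂_sum_eq t (by omega)]

/-- sorting the image under a strictly monotone (on the set) map. -/
theorem sort_image {α : Type*} [LinearOrder α] [DecidableEq α] {f : α → α} (hf : Monotone f)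
    {X : Finset α} (hinj : Set.InjOn f ↑X) :
    (X.image f).sort (· ≤ ·) = (X.sort (· ≤ ·)).map f := by
  refine (fun h1 h2 => List.Perm.eq_of_pairwise' (Finset.pairwise_sort _ _) h2 h1) ?_ ?_
  · rw [← Multiset.coe_eq_coe]
    have h1 : ((X.image f).sort (· ≤ ·) : Multiset α) = (X.image f).1 := Finset.sort_eq _ _
    have h2 : ((X.sort (· ≤ ·)).map f : Multiset α) = X.1.map f := by
      rw [← Multiset.map_coe, Finset.sort_eq]
    rw [h1, h2, Finset.image_val, Multiset.dedup_eq_self.2]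
    exact Multiset.Nodup.map_on (fun a ha b hb => hinj ha hb) X.2
  · exact List.Pairwise.map f (fun a b hab => hf hab) (Finset.pairwise_sort _ _)
/-! ### The maximal cross-section -/

open Finset in
/-- the maximal cross-section of `f`: elements that are the largest in their fiber,
with value different from `Fin.last n`. -/
noncomputable def maxSec {n : ℕ} (f : Fin (n+1) → Fin (n+1)) : Finset (Fin (n+1)) :=
  haveI := Classical.dec
  Finset.univ.filter fun i => f i ≠ Fin.last n ∧ ∀ j, f j = f i → j ≤ i

theorem mem_maxSec {n : ℕ} {f : Fin (n+1) → Fin (n+1)} {i : Fin (n+1)} :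
    i ∈ maxSec f ↔ f i ≠ Fin.last n ∧ ∀ j, f j = f i → j ≤ i := by
  simp [maxSec]

theorem cat_last {n : ℕ} {f : Fin (n+1) → Fin (n+1)} (hf : ∀ i, i ≤ f i) :
    f (Fin.last n) = Fin.last n :=
  le_antisymm (Fin.le_last _) (hf _)

theorem last_not_mem_maxSec {n : ℕ} {f : Fin (n+1) → Fin (n+1)} (hf : ∀ i, i ≤ f i) :
    Fin.last n ∉ maxSec f := by
  rw [mem_maxSec]
  push_neg
  intro h
  exact absurd (cat_last hf) h

theorem maxSec_PCS {n : ℕ} {f : Fin (n+1) → Fin (n+1)} (hf : ∀ i, i ≤ f i) :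
    maxSec f ∈ PCS f := by
  refine ⟨last_not_mem_maxSec hf, ?_, ?_⟩
  · rw [Finset.mem_image]
    rintro ⟨x, hx, hfx⟩
    exact (mem_maxSec.1 hx).1 hfx
  · intro a ha b hb hab
    have ha' := mem_maxSec.1 ha
    have hb' := mem_maxSec.1 hb
    exact le_antisymm (hb'.2 a hab) (ha'.2 b hab.symm)

theorem exists_maxSec {n : ℕ} {f : Fin (n+1) → Fin (n+1)} {i : Fin (n+1)}
    (hi : f i ≠ Fin.last n) : ∃ x ∈ maxSec f, f x = f i := by
  classical
  set fib := Finset.univ.filter fun j => f j = f i with hfib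
  have hne : fib.Nonempty := ⟨i, by simp [hfib]⟩
  have hmem := fib.max'_mem hne
  have hval : f (fib.max' hne) = f i := (Finset.mem_filter.1 hmem).2
  refine ⟨fib.max' hne, ?_, hval⟩
  rw [mem_maxSec, hval]
  exact ⟨hi, fun j hj =>
    Finset.le_max' fib j (Finset.mem_filter.2 ⟨Finset.mem_univ j, hj⟩)⟩

theorem image_subset_maxSec_image {n : ℕ} {f : Fin (n+1) → Fin (n+1)}
    {S : Finset (Fin (n+1))} (hS : S ∈ PCS f) : S.image f ⊆ (maxSec f).image f := by
  intro v hv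
  rw [Finset.mem_image] at hv ⊢
  obtain ⟨s, hs, rfl⟩ := hv
  have hne : f s ≠ Fin.last n := fun h => hS.2.1 (Finset.mem_image.2 ⟨s, hs, h⟩)
  obtain ⟨x, hx, hfx⟩ := exists_maxSec hne
  exact ⟨x, hx, hfx⟩

theorem card_le_maxSec {n : ℕ} {f : Fin (n+1) → Fin (n+1)}
    {S : Finset (Fin (n+1))} (hS : S ∈ PCS f) :
    S.card ≤ (maxSec f).card := by
  classical
  calc S.card = (S.image f).card := (Finset.card_image_of_injOn hS.2.2).symm
    _ ≤ ((maxSec f).image f).card := Finset.card_le_card (image_subset_maxSec_image hS)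
    _ ≤ (maxSec f).card := Finset.card_image_le

/-- the weight function used for the triangularity argument. -/
noncomputable def kap {n : ℕ} (X : Finset (Fin (n+1))) : ℕ :=
  X.card * ((n+1)*(n+1)+1) + ((X.sort (· ≤ ·)).map Fin.val).sum

theorem sort_val_sum_lt {n : ℕ} (X : Finset (Fin (n+1))) :
    ((X.sort (· ≤ ·)).map Fin.val).sum < (n+1)*(n+1)+1 := by
  have h1 : ∀ x ∈ (X.sort (· ≤ ·)).map Fin.val, x ≤ n := by
    rintro x hx
    rw [List.mem_map] at hx
    obtain ⟨a, _, rfl⟩ := hx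
    exact Nat.lt_succ_iff.1 a.2
  have h2 := List.sum_le_card_nsmul _ n h1
  have h3 : ((X.sort (· ≤ ·)).map Fin.val).length ≤ n + 1 := by
    rw [List.length_map, Finset.length_sort]
    simpa using Finset.card_le_univ X
  have := Nat.mul_le_mul h3 (le_refl n)
  simp only [smul_eq_mul] at h2
  nlinarith

theorem kap_lt_of_card_lt {n : ℕ} {S X : Finset (Fin (n+1))} (h : S.card < X.card) :
    kap S < kap X := by
  have h1 := sort_val_sum_lt S
  have h2 : (S.card + 1) * ((n+1)*(n+1)+1) ≤ X.card * ((n+1)*(n+1)+1) :=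
    Nat.mul_le_mul_right _ h
  unfold kap
  nlinarith [Nat.zero_le (((X.sort (· ≤ ·)).map Fin.val).sum)]

theorem kap_bound {n : ℕ} (X : Finset (Fin (n+1))) : kap X < (n+2)*((n+1)*(n+1)+1) := by
  have h1 := sort_val_sum_lt X
  have h2 : X.card ≤ n + 1 := by simpa using Finset.card_le_univ X
  unfold kap
  nlinarith
/-! ### Triangularity -/

theorem image_eq_of_card_eq {n : ℕ} {f : Fin (n+1) → Fin (n+1)}
    {S : Finset (Fin (n+1))} (hS : S ∈ PCS f) (hf : ∀ i, i ≤ f i)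
    (hcard : S.card = (maxSec f).card) : S.image f = (maxSec f).image f := by
  classical
  apply Finset.eq_of_subset_of_card_le (image_subset_maxSec_image hS)
  rw [Finset.card_image_of_injOn hS.2.2, Finset.card_image_of_injOn (maxSec_PCS hf).2.2, hcard]

/-- key triangularity: a partial cross-section either is the maximal one, or has
strictly smaller weight. -/
theorem pcs_triangular {n : ℕ} {f : Fin (n+1) → Fin (n+1)}
    {S : Finset (Fin (n+1))} (hS : S ∈ PCS f) (hf : Monotone f) (hf2 : ∀ i, i ≤ f i) :
    S = maxSec f ∨ kap S < kap (maxSec f) := by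
  classical
  rcases lt_or_eq_of_le (card_le_maxSec hS) with hlt | hcard
  · exact Or.inr (kap_lt_of_card_lt hlt)
  · -- equal cardinalities: equal images, hence elementwise domination
    have him := image_eq_of_card_eq hS hf2 hcard
    have hmap : (S.sort (· ≤ ·)).map f = ((maxSec f).sort (· ≤ ·)).map f := by
      rw [← sort_image hf hS.2.2, ← sort_image hf (maxSec_PCS hf2).2.2, him]
    have hle : List.Forall₂ (· ≤ ·) (S.sort (· ≤ ·)) ((maxSec f).sort (· ≤ ·)) := by
      refine forall₂_of_map_eq hmap fun a _ b hb hab => ?_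
      exact (mem_maxSec.1 ((Finset.mem_sort _).1 hb)).2 a hab
    have hle' : List.Forall₂ (· ≤ ·) ((S.sort (· ≤ ·)).map Fin.val)
        (((maxSec f).sort (· ≤ ·)).map Fin.val) := by
      rw [List.forall₂_map_right_iff, List.forall₂_map_left_iff]
      exact List.Forall₂.imp (fun a b h => h) hle
    rcases lt_or_eq_of_le (forall₂_sum_le hle') with hsum | hsum
    · refine Or.inr ?_
      unfold kap
      rw [hcard]
      omega
    · left
      have := forall₂_sum_eq hle' hsum
      have hsort : S.sort (· ≤ ·) = (maxSec f).sort (· ≤ ·) :=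
        List.map_injective_iff.2 Fin.val_injective this
      have := congrArg List.toFinset hsort
      rwa [Finset.sort_toFinset, Finset.sort_toFinset] at this

theorem ple_image {n : ℕ} {f : Fin (n+1) → Fin (n+1)} (hf : Monotone f)
    (hf2 : ∀ i, i ≤ f i) {S : Finset (Fin (n+1))} (hinj : Set.InjOn f ↑S) :
    Ple S (S.image f) := by
  classical
  rw [Ple, sort_image hf hinj, List.forall₂_map_right_iff]
  exact List.forall₂_same.2 fun a _ => hf2 a

/-! ### Injectivity of the maximal-cross-section map -/

theorem cat_min'_formula {n : ℕ} {f : Fin (n+1) → Fin (n+1)} (hf : Monotone f)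
    (hf2 : ∀ i, i ≤ f i) (j : Fin (n+1)) :
    f j = (insert (Fin.last n) (((maxSec f).filter (fun x => j ≤ x)).image f)).min'
      (Finset.insert_nonempty _ _) := by
  classical
  apply le_antisymm
  · apply Finset.le_min'
    intro y hy
    rcases Finset.mem_insert.1 hy with rfl | hy
    · exact Fin.le_last _
    · obtain ⟨x, hx, rfl⟩ := Finset.mem_image.1 hy
      exact hf (Finset.mem_filter.1 hx).2
  · apply Finset.min'_le
    by_cases hlast : f j = Fin.last n
    · rw [hlast]; exact Finset.mem_insert_self _ _
    · obtain ⟨x, hx, hfx⟩ := exists_maxSec hlast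
      refine Finset.mem_insert_of_mem (Finset.mem_image.2 ⟨x, ?_, hfx⟩)
      exact Finset.mem_filter.2 ⟨hx, (mem_maxSec.1 hx).2 j hfx.symm⟩

/-- `f` is determined by its maximal cross-section together with `f`'s values there. -/
theorem theta_inj {n : ℕ} {f g : Fin (n+1) → Fin (n+1)}
    (hfm : Monotone f) (hf2 : ∀ i, i ≤ f i) (hgm : Monotone g) (hg2 : ∀ i, i ≤ g i)
    (hX : maxSec f = maxSec g) (hY : (maxSec f).image f = (maxSec g).image g) : f = g := by
  classical
  have hpt : ∀ x ∈ maxSec f, f x = g x := by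
    have hmap : ((maxSec f).sort (· ≤ ·)).map f = ((maxSec f).sort (· ≤ ·)).map g := by
      rw [← sort_image hfm (maxSec_PCS hf2).2.2, hY, hX,
        ← sort_image hgm (maxSec_PCS hg2).2.2]
    intro x hx
    exact map_eq_pointwise hmap x ((Finset.mem_sort _).2 hx)
  funext j
  rw [cat_min'_formula hfm hf2 j, cat_min'_formula hgm hg2 j]
  have him : Finset.image f ((maxSec f).filter (fun x => j ≤ x)) =
      Finset.image g ((maxSec g).filter (fun x => j ≤ x)) := by
    rw [← hX]
    exact Finset.image_congr fun x hx =>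
      hpt x (Finset.mem_filter.1 (Finset.mem_coe.1 hx)).1
  congr 1
  rw [him]
/-! ### Properties of `phi` -/

theorem imageP_val {n : ℕ} {f : Fin (n+1) → Fin (n+1)} {X : Pn n}
    (h : Fin.last n ∉ X.1.image f) : (imageP f X).1 = X.1.image f := by
  rw [imageP, dif_pos h]

open Classical in
theorem phi_apply {n : ℕ} {k : Type*} [CommRing k] (f : Fin (n+1) → Fin (n+1))
    (X Y : Pn n) :
    phi n k f Y X = if X.1 ∈ PCS f ∧ imageP f X = Y then 1 else 0 := by
  classical
  rw [phi, Matrix.sum_apply]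
  by_cases hX : X.1 ∈ PCS f
  · rw [Finset.sum_eq_single_of_mem X (by simp [hX])
      (fun P _ hP => Matrix.single_apply_of_ne _ _ _ _ _ fun h => hP h.2)]
    by_cases hY : imageP f X = Y
    · rw [if_pos ⟨hX, hY⟩, hY, Matrix.single_apply_same]
    · rw [if_neg (fun h => hY h.2)]
      exact Matrix.single_apply_of_ne _ _ _ _ _ fun h => hY h.1
  · rw [if_neg (fun h => hX h.1)]
    refine Finset.sum_eq_zero fun P hP => ?_
    refine Matrix.single_apply_of_ne _ _ _ _ _ fun h => ?_
    rw [Finset.mem_filter] at hP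
    exact hX (h.2 ▸ hP.2)

theorem phi_mem {n : ℕ} {k : Type*} [CommRing k] {f : Fin (n+1) → Fin (n+1)}
    (hf : Monotone f) (hf2 : ∀ i, i ≤ f i) : phi n k f ∈ IncAlg n k := by
  intro X Y h
  rw [phi_apply, if_neg]
  rintro ⟨h1, rfl⟩
  rw [imageP_val h1.2.1] at h
  exact h (ple_image hf hf2 h1.2.2)

theorem phi_one {n : ℕ} {k : Type*} [CommRing k] :
    phi n k (1 : Function.End (Fin (n+1))) = (1 : Matrix (Pn n) (Pn n) k) := by
  classical
  ext Y X
  have h1 : (1 : Function.End (Fin (n+1))) = id := rfl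
  refine (phi_apply (k := k) _ X Y).trans ?_
  rw [Matrix.one_apply]
  have hX : X.1 ∈ PCS (1 : Function.End (Fin (n+1))) := by
    refine ⟨X.2, ?_, ?_⟩
    · rw [h1, Finset.image_id]; exact X.2
    · rw [h1]; exact Function.injective_id.injOn
  have him : imageP (1 : Function.End (Fin (n+1))) X = X := by
    have hid : X.1.image (1 : Function.End (Fin (n+1))) = X.1 := by
      rw [h1, Finset.image_id]
    apply Subtype.ext
    exact (imageP_val (f := (1 : Function.End (Fin (n+1)))) (X := X) (by rw [hid]; exact X.2)).trans hid
  simp [hX, him, eq_comm]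

theorem pcs_comp {n : ℕ} {f g : Fin (n+1) → Fin (n+1)} (hfl : f (Fin.last n) = Fin.last n)
    {S : Finset (Fin (n+1))} (hS : Fin.last n ∉ S) :
    S ∈ PCS (f ∘ g) ↔ S ∈ PCS g ∧ S.image g ∈ PCS f := by
  classical
  constructor
  · rintro ⟨-, h2, h3⟩
    have hgl : Fin.last n ∉ S.image g := by
      rw [Finset.mem_image]
      rintro ⟨s, hs, hgs⟩
      exact h2 (Finset.mem_image.2 ⟨s, hs, by simp [Function.comp, hgs, hfl]⟩)
    refine ⟨⟨hS, hgl, fun a ha b hb hab => h3 ha hb (by simp [Function.comp, hab])⟩,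
      hgl, ?_, ?_⟩
    · rwa [Finset.image_image]
    · rw [Finset.coe_image]
      rintro a ⟨a', ha', rfl⟩ b ⟨b', hb', rfl⟩ hab
      rw [h3 ha' hb' hab]
  · rintro ⟨⟨-, hgl, hginj⟩, ⟨-, hfgl, hfinj⟩⟩
    rw [Finset.image_image] at hfgl
    refine ⟨hS, hfgl, fun a ha b hb hab => ?_⟩
    have : g a = g b := by
      apply hfinj _ _ hab
      · rw [Finset.coe_image]; exact ⟨a, ha, rfl⟩
      · rw [Finset.coe_image]; exact ⟨b, hb, rfl⟩
    exact hginj ha hb this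

theorem imageP_comp {n : ℕ} {f g : Fin (n+1) → Fin (n+1)} {X : Pn n}
    (hg : X.1 ∈ PCS g) (hf : X.1.image g ∈ PCS f) :
    imageP (f ∘ g) X = imageP f (imageP g X) := by
  have h1 : (imageP g X).1 = X.1.image g := imageP_val hg.2.1
  have h2 : Fin.last n ∉ (imageP g X).1.image f := by rw [h1]; exact hf.2.1
  apply Subtype.ext
  rw [imageP_val h2, h1, Finset.image_image,
    imageP_val (by rw [← Finset.image_image]; exact hf.2.1)]

theorem phi_mul {n : ℕ} {k : Type*} [CommRing k] {f g : Fin (n+1) → Fin (n+1)}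
    (hfl : f (Fin.last n) = Fin.last n) :
    phi n k (f ∘ g) = phi n k f * phi n k g := by
  classical
  ext Y X
  rw [Matrix.mul_apply]
  rw [Finset.sum_eq_single_of_mem (imageP g X) (Finset.mem_univ _)
    (fun Z _ hZ => by rw [phi_apply g X Z, if_neg fun h => hZ h.2.symm, mul_zero])]
  rw [phi_apply, phi_apply, phi_apply]
  by_cases hg : X.1 ∈ PCS g
  · have h1 : (imageP g X).1 = X.1.image g := imageP_val hg.2.1
    by_cases hf : X.1.image g ∈ PCS f
    · have hc : X.1 ∈ PCS (f ∘ g) := (pcs_comp hfl X.2).2 ⟨hg, hf⟩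
      have hf2 : (imageP g X).1 ∈ PCS f := by rw [h1]; exact hf
      rw [imageP_comp hg hf]
      simp [hc, hg, hf2]
    · have hc : X.1 ∉ PCS (f ∘ g) := fun h => hf ((pcs_comp hfl X.2).1 h).2
      have hf2 : ¬ (imageP g X).1 ∈ PCS f := by rw [h1]; exact hf
      simp [hc, hf2]
  · have hc : X.1 ∉ PCS (f ∘ g) := fun h => hg ((pcs_comp hfl X.2).1 h).1
    simp [hc, hg]
/-! ### Construction of a Catalan map from a pair `X ≤ Y` -/

open Classical in
/-- the Catalan map whose maximal cross-section is `X` with image `Y`. -/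
noncomputable def xiFun {n : ℕ} (X Y : Pn n) : Fin (n+1) → Fin (n+1) :=
  if h : Y.1.card = X.1.card then
    fun j => (insert (Fin.last n) ((Finset.univ.filter fun i : Fin X.1.card =>
      j ≤ X.1.orderEmbOfFin rfl i).image fun i => Y.1.orderEmbOfFin h i)).min'
      (Finset.insert_nonempty _ _)
  else id

theorem xi_mono {n : ℕ} (X Y : Pn n) : Monotone (xiFun X Y) := by
  classical
  rw [xiFun]
  split
  · intro a b hab
    apply Finset.min'_subset
    apply Finset.insert_subset_insert
    apply Finset.image_subset_image
    intro i hi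
    rw [Finset.mem_filter] at hi ⊢
    exact ⟨hi.1, le_trans hab hi.2⟩
  · exact monotone_id

theorem ple_card {α : Type*} [LinearOrder α] {X Y : Finset α} (h : Ple X Y) :
    Y.card = X.card := by
  have := List.Forall₂.length_eq h
  rwa [Finset.length_sort, Finset.length_sort, eq_comm] at this

theorem ple_nth {n : ℕ} {X Y : Pn n} (hPle : Ple X.1 Y.1) (i : Fin X.1.card) :
    X.1.orderEmbOfFin rfl i ≤ Y.1.orderEmbOfFin (ple_card hPle) i := by
  rw [Finset.orderEmbOfFin_apply, Finset.orderEmbOfFin_apply]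
  have h1 : (i : ℕ) < (X.1.sort (· ≤ ·)).length := by
    rw [Finset.length_sort]; exact i.2
  have h2 : (i : ℕ) < (Y.1.sort (· ≤ ·)).length := by
    rw [Finset.length_sort, ple_card hPle]; exact i.2
  have := List.Forall₂.get hPle h1 h2
  simpa using this

theorem xi_incr {n : ℕ} {X Y : Pn n} (hPle : Ple X.1 Y.1) :
    ∀ j, j ≤ xiFun X Y j := by
  classical
  intro j
  rw [xiFun, dif_pos (ple_card hPle)]
  apply Finset.le_min'
  intro y hy
  rcases Finset.mem_insert.1 hy with rfl | hy
  · exact Fin.le_last _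
  · obtain ⟨i, hi, rfl⟩ := Finset.mem_image.1 hy
    calc j ≤ X.1.orderEmbOfFin rfl i := (Finset.mem_filter.1 hi).2
      _ ≤ Y.1.orderEmbOfFin (ple_card hPle) i := ple_nth hPle i

theorem exists_emb {α : Type*} [LinearOrder α] {X : Finset α} {k : ℕ} (h : X.card = k)
    {x : α} (hx : x ∈ X) : ∃ i, X.orderEmbOfFin h i = x := by
  have hr := Finset.range_orderEmbOfFin X h
  have : x ∈ Set.range (X.orderEmbOfFin h) := by rw [hr]; exact Finset.mem_coe.2 hx
  exact this

theorem xi_apply_emb {n : ℕ} {X Y : Pn n} (hPle : Ple X.1 Y.1) (i : Fin X.1.card) :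
    xiFun X Y (X.1.orderEmbOfFin rfl i) = Y.1.orderEmbOfFin (ple_card hPle) i := by
  classical
  rw [xiFun, dif_pos (ple_card hPle)]
  apply le_antisymm
  · apply Finset.min'_le
    apply Finset.mem_insert_of_mem
    exact Finset.mem_image.2 ⟨i, Finset.mem_filter.2 ⟨Finset.mem_univ _, le_rfl⟩, rfl⟩
  · apply Finset.le_min'
    intro y hy
    rcases Finset.mem_insert.1 hy with rfl | hy
    · exact Fin.le_last _
    · obtain ⟨i', hi', rfl⟩ := Finset.mem_image.1 hy
      have : i ≤ i' := (OrderEmbedding.le_iff_le _).1 (Finset.mem_filter.1 hi').2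
      exact (Y.1.orderEmbOfFin _).monotone this

theorem xi_gt {n : ℕ} {X Y : Pn n} (hPle : Ple X.1 Y.1) (i : Fin X.1.card)
    {j : Fin (n+1)} (hj : X.1.orderEmbOfFin rfl i < j) :
    Y.1.orderEmbOfFin (ple_card hPle) i < xiFun X Y j := by
  classical
  rw [xiFun, dif_pos (ple_card hPle), Finset.lt_min'_iff]
  intro y hy
  rcases Finset.mem_insert.1 hy with rfl | hy
  · refine lt_of_le_of_ne (Fin.le_last _) fun h => ?_
    have hm := Finset.orderEmbOfFin_mem Y.1 (ple_card hPle) i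
    rw [h] at hm
    exact Y.2 hm
  · obtain ⟨i', hi', rfl⟩ := Finset.mem_image.1 hy
    have : i < i' := (OrderEmbedding.lt_iff_lt _).1
      (lt_of_lt_of_le hj (Finset.mem_filter.1 hi').2)
    exact (Y.1.orderEmbOfFin _).strictMono this

theorem maxSec_xi {n : ℕ} {X Y : Pn n} (hPle : Ple X.1 Y.1) :
    maxSec (xiFun X Y) = X.1 := by
  classical
  ext x
  rw [mem_maxSec]
  constructor
  · rintro ⟨hne, hmax⟩
    have hmem : xiFun X Y x ∈ insert (Fin.last n)
        ((Finset.univ.filter fun i => x ≤ X.1.orderEmbOfFin rfl i).image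
          fun i => Y.1.orderEmbOfFin (ple_card hPle) i) := by
      rw [xiFun, dif_pos (ple_card hPle)]
      exact Finset.min'_mem _ _
    rcases Finset.mem_insert.1 hmem with heq | hmem
    · exact absurd heq hne
    · obtain ⟨i, hi, heq⟩ := Finset.mem_image.1 hmem
      have hxe : x ≤ X.1.orderEmbOfFin rfl i := (Finset.mem_filter.1 hi).2
      have hval : xiFun X Y (X.1.orderEmbOfFin rfl i) = xiFun X Y x := by
        rw [xi_apply_emb hPle i, heq]
      have hle := hmax _ hval
      have hxeq : x = X.1.orderEmbOfFin rfl i := le_antisymm hxe hle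
      rw [hxeq]
      exact Finset.orderEmbOfFin_mem _ _ _
  · intro hx
    obtain ⟨i, rfl⟩ := exists_emb rfl hx
    refine ⟨?_, ?_⟩
    · rw [xi_apply_emb hPle i]
      intro h
      have hm := Finset.orderEmbOfFin_mem Y.1 (ple_card hPle) i
      rw [h] at hm
      exact Y.2 hm
    · intro j hj
      by_contra hlt
      push_neg at hlt
      have := xi_gt hPle i hlt
      rw [hj, xi_apply_emb hPle i] at this
      exact lt_irrefl _ this

theorem image_xi {n : ℕ} {X Y : Pn n} (hPle : Ple X.1 Y.1) :
    X.1.image (xiFun X Y) = Y.1 := by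
  classical
  ext y
  rw [Finset.mem_image]
  constructor
  · rintro ⟨x, hx, rfl⟩
    obtain ⟨i, rfl⟩ := exists_emb rfl hx
    rw [xi_apply_emb hPle i]
    exact Finset.orderEmbOfFin_mem _ _ _
  · intro hy
    obtain ⟨i, rfl⟩ := exists_emb (ple_card hPle) hy
    exact ⟨_, Finset.orderEmbOfFin_mem _ _ _, xi_apply_emb hPle i⟩

open Classical in
/-- the element of the Catalan monoid attached to a pair `X ≤ Y` of `Pₙ`. -/
noncomputable def xiC {n : ℕ} (X Y : Pn n) : catalanMonoid (n+1) :=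
  if h : Ple X.1 Y.1 then ⟨xiFun X Y, xi_mono X Y, xi_incr h⟩ else 1

theorem xiC_of_ple {n : ℕ} {X Y : Pn n} (h : Ple X.1 Y.1) :
    (xiC X Y).1 = xiFun X Y := by
  rw [xiC, dif_pos h]
theorem mem_catalan_iff {n : ℕ} {f : Function.End (Fin n)} :
    f ∈ catalanMonoid n ↔ Monotone f ∧ ∀ i, i ≤ f i := Iff.rfl

theorem cat_mono {n : ℕ} (f : catalanMonoid n) : Monotone f.1 :=
  (mem_catalan_iff.1 f.2).1

theorem cat_le {n : ℕ} (f : catalanMonoid n) : ∀ i, i ≤ f.1 i :=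
  (mem_catalan_iff.1 f.2).2

set_option maxHeartbeats 1000000 in
noncomputable def phiHom (n : ℕ) (k : Type*) [CommRing k] :
    catalanMonoid (n+1) →* IncAlg n k where
  toFun f := ⟨phi n k f.1, phi_mem (cat_mono f) (cat_le f)⟩
  map_one' := Subtype.ext (by
    show phi n k ((1 : catalanMonoid (n+1)) : Function.End (Fin (n+1))) = 1
    rw [OneMemClass.coe_one]
    exact phi_one)
  map_mul' f g := Subtype.ext (by
    show phi n k ((f : Function.End (Fin (n+1))) * g.1) = phi n k f.1 * phi n k g.1
    rw [Function.End.mul_def]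
    exact phi_mul (cat_last (cat_le f)))

noncomputable def PhiA (n : ℕ) (k : Type*) [CommRing k] :
    MonoidAlgebra k (catalanMonoid (n+1)) →ₐ[k] IncAlg n k :=
  MonoidAlgebra.lift k (IncAlg n k) (catalanMonoid (n+1)) (phiHom n k)

theorem phiHom_coe {n : ℕ} {k : Type*} [CommRing k] (f : catalanMonoid (n+1)) :
    ((phiHom n k f : IncAlg n k) : Matrix (Pn n) (Pn n) k) = phi n k f.1 := rfl

theorem phiHom_val {n : ℕ} {k : Type*} [CommRing k] (f : catalanMonoid (n+1)) :
    (IncAlg n k).val (phiHom n k f) = phi n k f.1 := rfl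

theorem coe_PhiA_entry {n : ℕ} {k : Type*} [CommRing k]
    (a : MonoidAlgebra k (catalanMonoid (n+1))) (X Y : Pn n) :
    ((PhiA n k a : IncAlg n k) : Matrix (Pn n) (Pn n) k) Y X
      = ∑ g ∈ a.coeff.support, a.coeff g * phi n k g.1 Y X := by
  have hv : ((PhiA n k a : IncAlg n k) : Matrix (Pn n) (Pn n) k)
      = (IncAlg n k).val (PhiA n k a) := rfl
  rw [hv, PhiA, MonoidAlgebra.lift_apply, Finsupp.sum, map_sum, Matrix.sum_apply]
  refine Finset.sum_congr rfl fun g hg => ?_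
  rw [map_smul, Matrix.smul_apply, smul_eq_mul]
  rw [phiHom_val]
theorem PhiA_inj {n : ℕ} {k : Type*} [CommRing k] : Function.Injective (PhiA n k) := by
  classical
  rw [injective_iff_map_eq_zero]
  intro a ha
  by_contra h0
  have hsupp : a.coeff.support.Nonempty :=
    Finsupp.support_nonempty_iff.2 fun h => h0 (MonoidAlgebra.coeff_eq_zero.1 h)
  obtain ⟨f, hf, hmax⟩ :=
    Finset.exists_max_image a.coeff.support (fun g => kap (maxSec g.1)) hsupp
  set X : Pn n := ⟨maxSec f.1, last_not_mem_maxSec (cat_le f)⟩ with hXdef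
  set Y : Pn n := imageP f.1 X with hYdef
  have hentry : ((PhiA n k a : IncAlg n k) : Matrix (Pn n) (Pn n) k) Y X = a.coeff f := by
    rw [coe_PhiA_entry]
    rw [Finset.sum_eq_single_of_mem f hf]
    · have hXP : X.1 ∈ PCS f.1 := maxSec_PCS (cat_le f)
      erw [phi_apply, if_pos ⟨hXP, rfl⟩, mul_one]
    · intro g hg hne
      erw [phi_apply, if_neg, mul_zero]
      rintro ⟨hc, him⟩
      rcases pcs_triangular hc (cat_mono g) (cat_le g) with heq | hlt
      · have hYv : (imageP g.1 X).1 = X.1.image g.1 := imageP_val hc.2.1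
        have hYv' : (imageP f.1 X).1 = X.1.image f.1 :=
          imageP_val (maxSec_PCS (cat_le f)).2.1
        have himv : X.1.image g.1 = X.1.image f.1 := by
          rw [← hYv, ← hYv', him]
        have hgf : g.1 = f.1 := by
          apply theta_inj (cat_mono g) (cat_le g) (cat_mono f) (cat_le f) heq.symm
          rw [← heq]
          exact himv
        exact hne (Subtype.ext hgf)
      · exact absurd (hmax g hg) (not_le.2 hlt)
  rw [ha] at hentry
  exact (Finsupp.mem_support_iff.1 hf) (by simpa using hentry.symm)

theorem xiC_fun {n : ℕ} {X Y : Pn n} (h : Ple X.1 Y.1) :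
    ((xiC X Y : catalanMonoid (n+1)) : Function.End (Fin (n+1))) = xiFun X Y :=
  xiC_of_ple h

theorem phi_xi_entry_self {n : ℕ} {k : Type*} [CommRing k] {X Y : Pn n}
    (h : Ple X.1 Y.1) : phi n k (xiC X Y).1 Y X = 1 := by
  rw [xiC_fun h, phi_apply, if_pos]
  constructor
  · have := maxSec_PCS (xi_incr h)
    rwa [maxSec_xi h] at this
  · apply Subtype.ext
    rw [imageP_val (by rw [image_xi h]; exact Y.2), image_xi h]

theorem PhiA_surj {n : ℕ} {k : Type*} [CommRing k] : Function.Surjective (PhiA n k) := by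
  classical
  suffices h : ∀ B : ℕ, ∀ M : IncAlg n k,
      (∀ X Y : Pn n, B ≤ kap X.1 → (M : Matrix (Pn n) (Pn n) k) Y X = 0) →
      ∃ a, PhiA n k a = M by
    intro M
    exact h ((n+2)*((n+1)*(n+1)+1)) M fun X Y hB => absurd hB (not_le.2 (kap_bound X.1))
  intro B
  induction B with
  | zero =>
    intro M hM
    refine ⟨0, ?_⟩
    rw [map_zero]
    apply Subtype.ext
    ext Y X
    exact (hM X Y (Nat.zero_le _)).symm
  | succ B ih =>
    intro M hM
    set T : Finset (Pn n × Pn n) :=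
      Finset.univ.filter (fun p => Ple p.1.1 p.2.1 ∧ kap p.1.1 = B) with hT
    set a₀ : MonoidAlgebra k (catalanMonoid (n+1)) :=
      ∑ p ∈ T, MonoidAlgebra.single (xiC p.1 p.2)
        ((M : Matrix (Pn n) (Pn n) k) p.2 p.1) with ha₀
    have hcoe : ∀ Y X : Pn n,
        ((PhiA n k a₀ : IncAlg n k) : Matrix (Pn n) (Pn n) k) Y X
        = ∑ p ∈ T, (M : Matrix (Pn n) (Pn n) k) p.2 p.1 *
            phi n k (xiC p.1 p.2).1 Y X := by
      intro Y X
      have hs : PhiA n k a₀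
          = ∑ p ∈ T, ((M : Matrix (Pn n) (Pn n) k) p.2 p.1) • phiHom n k (xiC p.1 p.2) := by
        rw [ha₀, map_sum]
        refine Finset.sum_congr rfl fun p _ => ?_
        rw [PhiA, MonoidAlgebra.lift_single (phiHom n k)]
      have hval : ((PhiA n k a₀ : IncAlg n k) : Matrix (Pn n) (Pn n) k)
          = (IncAlg n k).val (PhiA n k a₀) := rfl
      rw [hval, hs, map_sum, Matrix.sum_apply]
      refine Finset.sum_congr rfl fun p _ => ?_
      rw [map_smul, Matrix.smul_apply, smul_eq_mul]
      rw [phiHom_val]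
    have hvanish : ∀ X Y : Pn n, B ≤ kap X.1 →
        ((M - PhiA n k a₀ : IncAlg n k) : Matrix (Pn n) (Pn n) k) Y X = 0 := by
      intro X Y hB
      by_cases hP : Ple X.1 Y.1
      · have hcoe_sub : ((M - PhiA n k a₀ : IncAlg n k) : Matrix (Pn n) (Pn n) k) Y X
            = (M : Matrix (Pn n) (Pn n) k) Y X
              - ((PhiA n k a₀ : IncAlg n k) : Matrix (Pn n) (Pn n) k) Y X := rfl
        rw [hcoe_sub, hcoe]
        rcases lt_or_eq_of_le hB with hgt | heqB
        · have hM0 : (M : Matrix (Pn n) (Pn n) k) Y X = 0 := hM X Y hgt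
          rw [hM0, Finset.sum_eq_zero, sub_zero]
          intro p hp
          rw [hT, Finset.mem_filter] at hp
          rw [xiC_fun hp.2.1, phi_apply, if_neg, mul_zero]
          rintro ⟨hc, -⟩
          rcases pcs_triangular hc (xi_mono p.1 p.2) (xi_incr hp.2.1) with heq | hlt
          · rw [maxSec_xi hp.2.1] at heq
            rw [heq, hp.2.2] at hgt
            omega
          · rw [maxSec_xi hp.2.1, hp.2.2] at hlt
            omega
        · have hp0 : (X, Y) ∈ T := by
            rw [hT, Finset.mem_filter]
            exact ⟨Finset.mem_univ _, hP, heqB.symm⟩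
          have hvan : ∀ p ∈ T, p ≠ (X, Y) →
              (M : Matrix (Pn n) (Pn n) k) p.2 p.1 * phi n k (xiC p.1 p.2).1 Y X = 0 := by
            intro p hp hne
            rw [hT, Finset.mem_filter] at hp
            rw [xiC_fun hp.2.1, phi_apply, if_neg, mul_zero]
            rintro ⟨hc, him⟩
            rcases pcs_triangular hc (xi_mono p.1 p.2) (xi_incr hp.2.1) with heq | hlt
            · rw [maxSec_xi hp.2.1] at heq
              apply hne
              have hX1 : p.1 = X := Subtype.ext heq.symm
              have hY1 : p.2 = Y := by
                apply Subtype.ext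
                rw [← him, imageP_val hc.2.1, heq, image_xi hp.2.1]
              rw [← hX1, ← hY1]
            · rw [maxSec_xi hp.2.1, hp.2.2] at hlt
              omega
          rw [Finset.sum_eq_single_of_mem (X, Y) hp0 hvan, phi_xi_entry_self hP,
            mul_one, sub_self]
      · exact (M - PhiA n k a₀).2 X Y hP
    obtain ⟨b, hb⟩ := ih (M - PhiA n k a₀) hvanish
    exact ⟨b + a₀, by rw [map_add, hb, sub_add_cancel]⟩

/-- Theorem 3.1: there is an isomorphism of `k`-algebras
`φ : kC_{n+1} → I(Pₙ, k)` with `φ(f) = ∑_{S ∈ PCS(f)} (S, f(S))` for every basis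
element `f ∈ C_{n+1}`. -/
theorem catalan_algebra_iso (n : ℕ) (k : Type*) [CommRing k] :
    ∃ φ : MonoidAlgebra k (catalanMonoid (n+1)) ≃ₐ[k] IncAlg n k,
      ∀ f : catalanMonoid (n+1),
        (φ (MonoidAlgebra.of k (catalanMonoid (n+1)) f) : Matrix (Pn n) (Pn n) k) =
          phi n k f.1 := by
  refine ⟨AlgEquiv.ofBijective (PhiA n k) ⟨PhiA_inj, PhiA_surj⟩, fun f => ?_⟩
  have h1 : (AlgEquiv.ofBijective (PhiA n k) ⟨PhiA_inj, PhiA_surj⟩)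
      (MonoidAlgebra.of k (catalanMonoid (n+1)) f)
      = PhiA n k (MonoidAlgebra.of k (catalanMonoid (n+1)) f) := rfl
  rw [h1, PhiA, MonoidAlgebra.lift_of]
  exact phiHom_coe f
end

section
/- For any commutative ring k with unit and any n ≥ 1, the monoid algebra kC_n of the Catalan monoid C_n over k is isomorphic as a k-algebra to the incidence algebra I(P_{n-1}, k) of the poset P_{n-1} over k. -/
namespace CatAux

open List Finset

variable {m : ℕ}

/-- sorted list of `S` with the top element appended. -/
def lw (S : Finset (Fin (m+1))) : List (Fin (m+1)) :=
  S.sort (· ≤ ·) ++ [Fin.last m]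

lemma lw_length (S : Finset (Fin (m+1))) : (lw S).length = S.card + 1 := by
  simp [lw]

lemma mem_lw {S : Finset (Fin (m+1))} {a} : a ∈ lw S ↔ a ∈ S ∨ a = Fin.last m := by
  simp [lw]

lemma lw_sorted_lt {S : Finset (Fin (m+1))} (hS : Fin.last m ∉ S) :
    (lw S).Pairwise (· < ·) := by
  rw [lw, List.pairwise_append]
  refine ⟨S.sortedLT_sort.pairwise, List.pairwise_singleton _ _, ?_⟩
  intro a ha b hb
  simp only [List.mem_singleton] at hb; subst hb
  exact lt_of_le_of_ne (Fin.le_last a) (fun h => hS (h ▸ (Finset.mem_sort _).1 ha))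

lemma lw_sorted_le {S : Finset (Fin (m+1))} (hS : Fin.last m ∉ S) :
    (lw S).Pairwise (· ≤ ·) := (lw_sorted_lt hS).imp le_of_lt

lemma sorted_getElem_lt {l : List (Fin (m+1))} (h : l.Pairwise (· < ·)) {a b : ℕ}
    (ha : a < l.length) (hb : b < l.length) (hab : a < b) : l[a] < l[b] :=
  List.pairwise_iff_getElem.1 h a b ha hb hab

lemma sorted_getElem_le {l : List (Fin (m+1))} (h : l.Pairwise (· ≤ ·)) {a b : ℕ}
    (ha : a < l.length) (hb : b < l.length) (hab : a ≤ b) : l[a] ≤ l[b] := by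
  rcases eq_or_lt_of_le hab with rfl | h'
  · exact le_rfl
  · exact List.pairwise_iff_getElem.1 h a b ha hb h'

lemma ple_card {X Y : Finset (Fin (m+1))} (hP : Ple X Y) : X.card = Y.card := by
  have := hP.length_eq; simpa using this

lemma lw_forall₂ {X Y : Finset (Fin (m+1))} (hP : Ple X Y) :
    List.Forall₂ (· ≤ ·) (lw X) (lw Y) :=
  List.rel_append hP (List.Forall₂.cons le_rfl List.Forall₂.nil)

lemma lw_len_eq {X Y : Finset (Fin (m+1))} (hP : Ple X Y) :
    (lw X).length = (lw Y).length := by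
  simp [lw_length, ple_card hP]

/-- index of the first element of `lw X` that is `≥ i`. -/
def jdx (X : Finset (Fin (m+1))) (i : Fin (m+1)) : ℕ :=
  (lw X).findIdx (fun u => decide (i ≤ u))

lemma jdx_lt (X : Finset (Fin (m+1))) (i : Fin (m+1)) : jdx X i < (lw X).length := by
  apply List.findIdx_lt_length_of_exists
  exact ⟨Fin.last m, mem_lw.2 (Or.inr rfl), by simp [Fin.le_last]⟩

lemma le_get_jdx (X : Finset (Fin (m+1))) (i : Fin (m+1)) :
    i ≤ (lw X)[jdx X i]'(jdx_lt X i) := by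
  have := List.findIdx_getElem (p := fun u => decide (i ≤ u)) (xs := lw X) (w := jdx_lt X i)
  exact of_decide_eq_true this

lemma jdx_le {X : Finset (Fin (m+1))} {i : Fin (m+1)} {t : ℕ} (ht : t < (lw X).length)
    (h : i ≤ (lw X)[t]) : jdx X i ≤ t := by
  by_contra hc
  push_neg at hc
  have := List.not_of_lt_findIdx (p := fun u => decide (i ≤ u)) hc
  simp [h] at this

/-- the map reconstructed from an interval `(X, Y)`. -/
def gam (X Y : Finset (Fin (m+1))) (i : Fin (m+1)) : Fin (m+1) :=
  (lw Y).getD (jdx X i) (Fin.last m)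

lemma gam_eq {X Y : Finset (Fin (m+1))} (hP : Ple X Y) (i : Fin (m+1)) :
    gam X Y i = (lw Y)[jdx X i]'(by rw [← lw_len_eq hP]; exact jdx_lt X i) := by
  rw [gam, List.getD_eq_getElem]

lemma jdx_get {X : Finset (Fin (m+1))} (hX : Fin.last m ∉ X) {t : ℕ}
    (ht : t < (lw X).length) : jdx X (lw X)[t] = t := by
  rcases lt_or_eq_of_le (jdx_le ht le_rfl) with h | h
  · exact absurd (le_get_jdx X _)
      (not_le.2 (sorted_getElem_lt (lw_sorted_lt hX) (jdx_lt _ _) ht h))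
  · exact h

lemma gam_get {X Y : Finset (Fin (m+1))} (hX : Fin.last m ∉ X) (hP : Ple X Y) {t : ℕ}
    (ht : t < (lw X).length) :
    gam X Y (lw X)[t] = (lw Y)[t]'(by rw [← lw_len_eq hP]; exact ht) := by
  rw [gam_eq hP]
  congr 1
  exact jdx_get hX ht

lemma gam_monotone {X Y : Finset (Fin (m+1))} (hY : Fin.last m ∉ Y) (hP : Ple X Y) :
    Monotone (gam X Y) := by
  intro i j hij
  rw [gam_eq hP, gam_eq hP]
  apply sorted_getElem_le (lw_sorted_le hY)
  exact jdx_le (jdx_lt X j) (le_trans hij (le_get_jdx X j))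

lemma le_gam {X Y : Finset (Fin (m+1))} (hP : Ple X Y) (i : Fin (m+1)) :
    i ≤ gam X Y i := by
  rw [gam_eq hP]
  refine le_trans (le_get_jdx X i) ?_
  have h := List.forall₂_iff_get.1 (lw_forall₂ hP)
  exact h.2 _ (jdx_lt X i) _

lemma gam_mem_range {X Y : Finset (Fin (m+1))} (hP : Ple X Y) (i : Fin (m+1)) :
    gam X Y i ∈ Y ∨ gam X Y i = Fin.last m := by
  rw [gam_eq hP]
  exact mem_lw.1 (List.getElem_mem _)

lemma sort_map_gam {X Y : Finset (Fin (m+1))} (hX : Fin.last m ∉ X) (hP : Ple X Y) :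
    (X.sort (· ≤ ·)).map (gam X Y) = Y.sort (· ≤ ·) := by
  apply List.ext_getElem
  · simp [ple_card hP]
  · intro t h1 h2
    simp only [List.length_map] at h1
    rw [List.getElem_map]
    have hlX : t < (lw X).length := by rw [lw_length]; simp at h1; omega
    have e1 : (X.sort (· ≤ ·))[t]'h1 = (lw X)[t]'hlX :=
      (List.getElem_append_left h1).symm
    have e2 : (Y.sort (· ≤ ·))[t]'h2 = (lw Y)[t]'(by rw [← lw_len_eq hP]; exact hlX) :=
      (List.getElem_append_left h2).symm
    rw [e1, e2, gam_get hX hP hlX]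

lemma list_toFinset_map {α β : Type*} [DecidableEq α] [DecidableEq β] (l : List α)
    (f : α → β) : (l.map f).toFinset = l.toFinset.image f := by
  ext a; simp

lemma gam_image {X Y : Finset (Fin (m+1))} (hX : Fin.last m ∉ X) (hP : Ple X Y) :
    X.image (gam X Y) = Y := by
  classical
  have h1 : X.image (gam X Y) = ((X.sort (· ≤ ·)).map (gam X Y)).toFinset := by
    rw [list_toFinset_map, Finset.sort_toFinset]
  rw [h1, sort_map_gam hX hP, Finset.sort_toFinset]

lemma gam_fiber_max {X Y : Finset (Fin (m+1))} (hX : Fin.last m ∉ X) (hY : Fin.last m ∉ Y)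
    (hP : Ple X Y) {i x : Fin (m+1)} (hx : x ∈ X) (h : gam X Y i = gam X Y x) : i ≤ x := by
  by_contra hc
  push_neg at hc
  obtain ⟨t, h1, ht⟩ := List.mem_iff_getElem.1 ((Finset.mem_sort (α := Fin (m+1)) (· ≤ ·)).2 hx)
  have hlX : t < (lw X).length := by rw [lw_length]; simp at h1; omega
  have hxt : (lw X)[t]'hlX = x := by
    rw [show (lw X)[t]'hlX = (X.sort (· ≤ ·))[t]'h1 from List.getElem_append_left h1]
    exact ht
  have hjt : t < jdx X i := by
    rcases lt_or_ge t (jdx X i) with h' | h'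
    · exact h'
    · exfalso
      have := le_get_jdx X i
      have h2 : (lw X)[jdx X i]'(jdx_lt X i) ≤ (lw X)[t]'hlX :=
        sorted_getElem_le (lw_sorted_le hX) _ _ h'
      rw [hxt] at h2
      exact absurd (le_trans this h2) (not_le.2 hc)
  have : gam X Y x < gam X Y i := by
    rw [← hxt, gam_get hX hP hlX, gam_eq hP]
    exact sorted_getElem_lt (lw_sorted_lt hY) _ _ hjt
  rw [h] at this
  exact lt_irrefl _ this

end CatAux

namespace CatAux
open List Finset
variable {m : ℕ}

lemma sort_image {S : Finset (Fin (m+1))} {f : Fin (m+1) → Fin (m+1)}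
    (hf : Monotone f) (hinj : Set.InjOn f S) :
    (S.image f).sort (· ≤ ·) = (S.sort (· ≤ ·)).map f := by
  refine List.Perm.eq_of_pairwise' (r := (· ≤ ·)) ?_ ?_ ?_
  rotate_right
  · rw [← Multiset.coe_eq_coe]
    have h1 : ((S.image f).sort (· ≤ ·) : Multiset (Fin (m+1))) = (S.image f).val :=
      Finset.sort_eq _ _
    rw [h1, Finset.image_val_of_injOn hinj, ← Multiset.map_coe, Finset.sort_eq]
  · exact Finset.pairwise_sort _ _
  · rw [List.pairwise_map]
    exact (Finset.pairwise_sort S (· ≤ ·)).imp (fun h => hf h)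

lemma forall₂_le_map {S : Finset (Fin (m+1))} {f : Fin (m+1) → Fin (m+1)}
    (hf2 : ∀ i, i ≤ f i) :
    List.Forall₂ (· ≤ ·) (S.sort (· ≤ ·)) ((S.sort (· ≤ ·)).map f) := by
  rw [List.forall₂_map_right_iff]
  exact List.forall₂_same.2 fun x _ => hf2 x

lemma ple_image {S : Finset (Fin (m+1))} {f : Fin (m+1) → Fin (m+1)}
    (hf : Monotone f) (hf2 : ∀ i, i ≤ f i) (hinj : Set.InjOn f S) :
    Ple S (S.image f) := by
  rw [Ple, sort_image hf hinj]
  exact forall₂_le_map hf2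

section Rec

variable {f : Fin (m+1) → Fin (m+1)} (hf : Monotone f) (hf2 : ∀ i, i ≤ f i)

lemma f_last (hf2 : ∀ i, i ≤ f i) : f (Fin.last m) = Fin.last m :=
  le_antisymm (Fin.le_last _) (hf2 _)

/-- the set of maxima of fibers of `f`, except the top one. -/
def Xof (f : Fin (m+1) → Fin (m+1)) : Finset (Fin (m+1)) :=
  Finset.univ.filter fun i => i ≠ Fin.last m ∧ ∀ j, f j = f i → j ≤ i

def Yof (f : Fin (m+1) → Fin (m+1)) : Finset (Fin (m+1)) := (Xof f).image f

lemma last_not_mem_Xof : Fin.last m ∉ Xof f := by simp [Xof]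

lemma injOn_Xof : Set.InjOn f (Xof f) := by
  intro a ha b hb hab
  simp only [Xof, Finset.coe_filter, Set.mem_setOf_eq] at ha hb
  exact le_antisymm (hb.2.2 a hab) (ha.2.2 b hab.symm)

lemma last_not_mem_Yof (hf2 : ∀ i, i ≤ f i) : Fin.last m ∉ Yof f := by
  simp only [Yof, Finset.mem_image, not_exists]
  rintro x hx
  obtain ⟨hx, hfx⟩ := hx
  simp only [Xof, Finset.mem_filter] at hx
  have : Fin.last m ≤ x := hx.2.2 _ (by rw [f_last hf2, hfx])
  exact hx.2.1 (le_antisymm (Fin.le_last x) this)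

lemma ple_Xof_Yof (hf : Monotone f) (hf2 : ∀ i, i ≤ f i) : Ple (Xof f) (Yof f) :=
  ple_image hf hf2 injOn_Xof

lemma lw_Yof (hf : Monotone f) (hf2 : ∀ i, i ≤ f i) :
    lw (Yof f) = (lw (Xof f)).map f := by
  rw [lw, lw, List.map_append, Yof, sort_image hf injOn_Xof]
  simp [f_last hf2]

lemma gam_Xof_Yof (hf : Monotone f) (hf2 : ∀ i, i ≤ f i) :
    gam (Xof f) (Yof f) = f := by
  funext i
  have hP := ple_Xof_Yof hf hf2
  rw [gam_eq hP]
  have hjl := jdx_lt (Xof f) i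
  have hjl' : jdx (Xof f) i < (lw (Yof f)).length := by
    rw [← lw_len_eq hP]; exact hjl
  have h1 : (lw (Yof f))[jdx (Xof f) i]'hjl' = f ((lw (Xof f))[jdx (Xof f) i]'hjl) := by
    have := lw_Yof hf hf2
    rw [List.getElem_of_eq this, List.getElem_map]
  rw [h1]
  set u := (lw (Xof f))[jdx (Xof f) i]'hjl with hu
  -- `u` is the least element of `Xof f ∪ {last}` that is `≥ i`; show `f u = f i`
  have hiu : i ≤ u := le_get_jdx _ _
  -- the max of the fiber of i
  have hne : (Finset.univ.filter fun j => f j = f i).Nonempty := ⟨i, by simp⟩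
  set M := (Finset.univ.filter fun j => f j = f i).max' hne with hM
  have hfM : f M = f i := by
    have := (Finset.univ.filter fun j => f j = f i).max'_mem hne
    simpa using this
  have hM2 : ∀ j, f j = f i → j ≤ M := fun j hj =>
    Finset.le_max' _ _ (by simpa using hj)
  have hMlw : M ∈ lw (Xof f) := by
    rcases eq_or_ne M (Fin.last m) with h | h
    · exact mem_lw.2 (Or.inr h)
    · refine mem_lw.2 (Or.inl ?_)
      simp only [Xof, Finset.mem_filter, Finset.mem_univ, true_and]
      exact ⟨h, fun j hj => hM2 j (by rw [← hfM]; exact hj)⟩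
  obtain ⟨t, ht, hMt⟩ := List.mem_iff_getElem.1 hMlw
  have hjt : jdx (Xof f) i ≤ t := jdx_le ht (by rw [hMt]; exact hM2 i rfl)
  have huM : u ≤ M := by
    rw [hu, ← hMt]
    exact sorted_getElem_le (lw_sorted_le last_not_mem_Xof) _ _ hjt
  exact le_antisymm (le_trans (hf huM) (le_of_eq hfM)) (hf hiu)

end Rec
end CatAux

namespace CatAux
open Finset
variable {m : ℕ}

def cond (f : Fin (m+1) → Fin (m+1)) (X Y : Finset (Fin (m+1))) : Prop :=
  X.image f = Y ∧ (X.image f).card = X.card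

instance (f : Fin (m+1) → Fin (m+1)) (X Y : Finset (Fin (m+1))) : Decidable (cond f X Y) := by
  unfold cond; infer_instance

instance (f : Function.End (Fin (m+1))) (X Y : Finset (Fin (m+1))) : Decidable (cond f X Y) := by
  unfold cond; infer_instance

lemma cond_ple {f : Fin (m+1) → Fin (m+1)} (hf : Monotone f) (hf2 : ∀ i, i ≤ f i)
    {X Y : Finset (Fin (m+1))} (h : cond f X Y) : Ple X Y := by
  obtain ⟨h1, h2⟩ := h
  subst h1
  exact ple_image hf hf2 (Finset.card_image_iff.1 h2)

lemma cond_gam {X Y : Finset (Fin (m+1))} (hX : Fin.last m ∉ X) (hP : Ple X Y) :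
    cond (gam X Y) X Y :=
  ⟨gam_image hX hP, by rw [gam_image hX hP]; exact (ple_card hP).symm⟩

/-- the weight used for the triangularity argument. -/
def wt (X : Finset (Fin (m+1))) : ℕ := X.card * ((m+1)*(m+1)) + ∑ x ∈ X, (x : ℕ)

lemma sum_val_lt (X : Finset (Fin (m+1))) : ∑ x ∈ X, (x : ℕ) < (m+1)*(m+1) := by
  calc ∑ x ∈ X, (x : ℕ) ≤ X.card • m :=
        Finset.sum_le_card_nsmul X _ m (fun x _ => Fin.is_le x)
    _ ≤ (m+1) * m := by
        rw [smul_eq_mul]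
        exact Nat.mul_le_mul_right m (le_trans (Finset.card_le_card (Finset.subset_univ X))
          (le_of_eq (Finset.card_fin (m+1))))
    _ < (m+1)*(m+1) := by nlinarith

/-- Triangularity: if the map reconstructed from `(X,Y)` carries another interval
`(X',Y')`, then either the intervals coincide or `(X',Y')` has smaller weight. -/
lemma tri {X Y X' Y' : Finset (Fin (m+1))} (hX : Fin.last m ∉ X) (hY : Fin.last m ∉ Y)
    (hP : Ple X Y) (hY' : Fin.last m ∉ Y')
    (hc : cond (gam X Y) X' Y') (hne : ¬(X' = X ∧ Y' = Y)) : wt X' < wt X := by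
  classical
  set f := gam X Y with hfdef
  obtain ⟨hc1, hc2⟩ := hc
  have hYsub : Y' ⊆ Y := by
    intro y hy
    rw [← hc1] at hy
    obtain ⟨x', _, rfl⟩ := Finset.mem_image.1 hy
    rcases gam_mem_range hP x' with h | h
    · exact h
    · have h' : f x' = Fin.last m := h
      exact absurd (hc1 ▸ (h' ▸ hy)) hY'
  have hcard : X'.card ≤ X.card := by
    calc X'.card = Y'.card := by rw [← hc1]; exact hc2.symm
      _ ≤ Y.card := Finset.card_le_card hYsub
      _ = X.card := (ple_card hP).symm
  rcases lt_or_eq_of_le hcard with hlt | heq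
  · -- smaller cardinality: weight drops thanks to the big factor
    have h1 := sum_val_lt X'
    have h2 : X'.card + 1 ≤ X.card := hlt
    calc wt X' < X'.card * ((m+1)*(m+1)) + (m+1)*(m+1) := by
          rw [wt]; omega
      _ = (X'.card + 1) * ((m+1)*(m+1)) := by ring
      _ ≤ X.card * ((m+1)*(m+1)) := Nat.mul_le_mul_right _ h2
      _ ≤ wt X := Nat.le_add_right _ _
  · -- equal cardinality: `Y' = Y` and the element sum strictly drops
    have hYeq : Y' = Y := by
      apply Finset.eq_of_subset_of_card_le hYsub
      rw [← ple_card hP, ← heq, ← hc2, hc1]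
    have hXne : X' ≠ X := fun h => hne ⟨h, hYeq⟩
    have hinj' : Set.InjOn f X' := Finset.card_image_iff.1 hc2
    have himY : X.image f = Y := gam_image hX hP
    -- map each element of `X'` to the max of its fiber, which lies in `X`
    have hex : ∀ a : Fin (m+1), a ∈ X' → ∃ x, x ∈ X ∧ f x = f a := by
      intro a ha
      have : f a ∈ Y := hYeq ▸ (hc1 ▸ Finset.mem_image_of_mem f ha)
      rw [← himY] at this
      obtain ⟨x, hx, hfx⟩ := Finset.mem_image.1 this
      exact ⟨x, hx, hfx⟩
    set g : Fin (m+1) → Fin (m+1) :=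
      fun a => if h : ∃ x, x ∈ X ∧ f x = f a then h.choose else a with hg
    have hgmem : ∀ a ∈ X', g a ∈ X := by
      intro a ha
      rw [hg]; simp only
      rw [dif_pos (hex a ha)]
      exact (hex a ha).choose_spec.1
    have hgf : ∀ a ∈ X', f (g a) = f a := by
      intro a ha
      rw [hg]; simp only
      rw [dif_pos (hex a ha)]
      exact (hex a ha).choose_spec.2
    have hle : ∀ a ∈ X', a ≤ g a := by
      intro a ha
      exact gam_fiber_max hX hY hP (hgmem a ha) (hgf a ha).symm
    have hginj : Set.InjOn g X' := by
      intro a ha b hb hab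
      apply hinj' ha hb
      rw [← hgf a ha, ← hgf b hb, hab]
    have hsne : ∃ a ∈ X', a ≠ g a := by
      by_contra hcon
      push_neg at hcon
      apply hXne
      have h1 : X'.image g = X' := by
        have h0 : X'.image g = X'.image id :=
          Finset.image_congr (fun a ha => (hcon a (by simpa using ha)).symm)
        rw [h0, Finset.image_id]
      have h2 : X'.image g = X := by
        apply Finset.eq_of_subset_of_card_le
        · intro y hy; obtain ⟨a, ha, rfl⟩ := Finset.mem_image.1 hy; exact hgmem a ha
        · rw [Finset.card_image_of_injOn hginj] at *; omega
      rw [← h1, h2]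
    have hsum : ∑ x ∈ X', (x : ℕ) < ∑ x ∈ X, (x : ℕ) := by
      obtain ⟨a0, ha0, hane⟩ := hsne
      calc ∑ x ∈ X', (x : ℕ) < ∑ x ∈ X', ((g x : Fin (m+1)) : ℕ) := by
            apply Finset.sum_lt_sum
            · intro i hi; exact_mod_cast hle i hi
            · exact ⟨a0, ha0, by
                have := lt_of_le_of_ne (hle a0 ha0) hane
                exact_mod_cast this⟩
        _ = ∑ x ∈ X'.image g, (x : ℕ) := (Finset.sum_image (fun a ha b hb h => hginj ha hb h)).symm
        _ ≤ ∑ x ∈ X, (x : ℕ) := Finset.sum_le_sum_of_subset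
              (fun y hy => by obtain ⟨a, ha, rfl⟩ := Finset.mem_image.1 hy; exact hgmem a ha)
    rw [wt, wt, heq]
    omega

end CatAux

namespace CatAux
open Finset

variable {m : ℕ}

/-- the intervals of the poset `Pₙ`. -/
abbrev Itv (m : ℕ) := {p : Pn m × Pn m // Ple p.1.1 p.2.1}

instance : DecidablePred (fun p : Pn m × Pn m => Ple p.1.1 p.2.1) := fun _ => by
  unfold Ple; infer_instance

noncomputable instance : Fintype (Itv m) := Subtype.fintype _

variable (k : Type*) [CommRing k]

/-- the representation matrix of a map `f`. -/
def rho (f : Fin (m+1) → Fin (m+1)) : Matrix (Pn m) (Pn m) k :=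
  fun Y X => if cond f X.1 Y.1 then 1 else 0

lemma rho_apply (f : Fin (m+1) → Fin (m+1)) (Y X : Pn m) :
    rho k f Y X = if cond f X.1 Y.1 then 1 else 0 := rfl

lemma rho_mem {f : Fin (m+1) → Fin (m+1)} (hf : Monotone f) (hf2 : ∀ i, i ≤ f i) :
    rho k f ∈ IncAlg m k := by
  intro X Y h
  rw [rho_apply, if_neg]
  exact fun hc => h (cond_ple hf hf2 hc)

lemma rho_one : rho k (id : Fin (m+1) → Fin (m+1)) = (1 : Matrix (Pn m) (Pn m) k) := by
  funext Y X
  rw [rho_apply]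
  by_cases h : Y = X
  · subst h
    rw [if_pos ⟨Finset.image_id, by rw [Finset.image_id]⟩, Matrix.one_apply_eq]
  · rw [Matrix.one_apply_ne h, if_neg]
    rintro hc
    exact h (Subtype.ext (by rw [← hc.1, Finset.image_id]))

lemma rho_mul {f g : Fin (m+1) → Fin (m+1)} (hf : Monotone f) (hf2 : ∀ i, i ≤ f i)
    (hg : Monotone g) (hg2 : ∀ i, i ≤ g i) :
    rho k (f ∘ g) = rho k f * rho k g := by
  funext Y X
  rw [Matrix.mul_apply, rho_apply]
  by_cases h0 : Fin.last m ∉ X.1.image g ∧ (X.1.image g).card = X.1.card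
  · set Z0 : Pn m := ⟨X.1.image g, h0.1⟩ with hZ0
    have hsum : ∑ Z : Pn m, rho k f Y Z * rho k g Z X = rho k f Y Z0 * rho k g Z0 X := by
      apply Finset.sum_eq_single Z0
      · intro Z _ hZ
        have hz : rho k g Z X = 0 := by
          rw [rho_apply, if_neg]
          exact fun hc => hZ (Subtype.ext hc.1.symm)
        rw [hz, mul_zero]
      · intro h; exact absurd (Finset.mem_univ _) h
    rw [hsum]
    have h1 : rho k g Z0 X = 1 := by rw [rho_apply, if_pos ⟨rfl, h0.2⟩]
    rw [h1, mul_one, rho_apply]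
    have hiff : cond (f ∘ g) X.1 Y.1 ↔ cond f Z0.1 Y.1 := by
      unfold cond
      show _ ↔ ((X.1.image g).image f = Y.1 ∧ ((X.1.image g).image f).card = (X.1.image g).card)
      rw [Finset.image_image, h0.2]
    exact if_congr hiff rfl rfl
  · have hz : ∀ Z : Pn m, rho k f Y Z * rho k g Z X = 0 := by
      intro Z
      have h2 : rho k g Z X = 0 := by
        rw [rho_apply, if_neg]
        rintro ⟨h1, h2⟩
        exact h0 ⟨h1 ▸ Z.2, h2⟩
      rw [h2, mul_zero]
    rw [Finset.sum_congr rfl (fun Z _ => hz Z), Finset.sum_const_zero, if_neg]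
    rintro ⟨h1, h2⟩
    apply h0
    have him : X.1.image (f ∘ g) = (X.1.image g).image f := (Finset.image_image).symm
    have hle1 : (X.1.image (f ∘ g)).card ≤ (X.1.image g).card := by
      rw [him]; exact Finset.card_image_le
    have hle2 : (X.1.image g).card ≤ X.1.card := Finset.card_image_le
    have hcg : (X.1.image g).card = X.1.card := by omega
    refine ⟨fun hlast => ?_, hcg⟩
    apply Y.2
    rw [← h1, him]
    have hmem : f (Fin.last m) ∈ (X.1.image g).image f := Finset.mem_image_of_mem f hlast
    rwa [f_last hf2] at hmem

/-- the representation as a monoid homomorphism into the incidence algebra. -/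
noncomputable def rhoM : catalanMonoid (m+1) →* IncAlg m k where
  toFun f := ⟨rho k f.1, rho_mem k f.2.1 f.2.2⟩
  map_one' := Subtype.ext (rho_one k)
  map_mul' f g := Subtype.ext (rho_mul k f.2.1 f.2.2 g.2.1 g.2.2)

/-- the reconstruction map, valued in the Catalan monoid. -/
def gamM (p : Itv m) : catalanMonoid (m+1) :=
  ⟨gam p.1.1.1 p.1.2.1, gam_monotone p.1.2.2 p.2, le_gam p.2⟩

lemma itv_ext {p q : Itv m} (h1 : p.1.1.1 = q.1.1.1) (h2 : p.1.2.1 = q.1.2.1) : p = q :=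
  Subtype.ext (Prod.ext (Subtype.ext h1) (Subtype.ext h2))

lemma gamM_injective : Function.Injective (gamM (m := m)) := by
  intro p q h
  have hval : gam p.1.1.1 p.1.2.1 = gam q.1.1.1 q.1.2.1 := Subtype.ext_iff.1 h
  have hq' : cond (gam p.1.1.1 p.1.2.1) q.1.1.1 q.1.2.1 := by
    rw [hval]; exact cond_gam q.1.1.2 q.2
  have hp' : cond (gam q.1.1.1 q.1.2.1) p.1.1.1 p.1.2.1 := by
    rw [← hval]; exact cond_gam p.1.1.2 p.2
  by_cases hc : q.1.1.1 = p.1.1.1 ∧ q.1.2.1 = p.1.2.1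
  · exact (itv_ext hc.1 hc.2).symm
  · have h1 := tri p.1.1.2 p.1.2.2 p.2 q.1.2.2 hq' hc
    by_cases hc2 : p.1.1.1 = q.1.1.1 ∧ p.1.2.1 = q.1.2.1
    · exact itv_ext hc2.1 hc2.2
    · have h2 := tri q.1.1.2 q.1.2.2 q.2 p.1.2.2 hp' hc2
      omega

lemma gamM_surjective : Function.Surjective (gamM (m := m)) := by
  intro f
  obtain ⟨hf, hf2⟩ := f.2
  refine ⟨⟨⟨⟨Xof f.1, last_not_mem_Xof⟩, ⟨Yof f.1, last_not_mem_Yof hf2⟩⟩,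
    ple_Xof_Yof hf hf2⟩, ?_⟩
  exact Subtype.ext (gam_Xof_Yof hf hf2)

/-- matrix units of the incidence algebra. -/
def Emat (p : Itv m) : IncAlg m k :=
  ⟨(fun Y X => if Y = p.1.2 ∧ X = p.1.1 then 1 else 0), by
    intro X Y h
    show (if Y = p.1.2 ∧ X = p.1.1 then (1:k) else 0) = 0
    rw [if_neg]; rintro ⟨rfl, rfl⟩; exact h p.2⟩

lemma Emat_apply (p : Itv m) (Y X : Pn m) :
    (Emat k p).1 Y X = if Y = p.1.2 ∧ X = p.1.1 then 1 else 0 := rfl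

/-- the coefficient functional. -/
def coefAt (p : Itv m) : IncAlg m k →ₗ[k] k where
  toFun M := M.1 p.1.2 p.1.1
  map_add' M N := rfl
  map_smul' c M := rfl

lemma coefAt_apply (p : Itv m) (M : IncAlg m k) : coefAt k p M = M.1 p.1.2 p.1.1 := rfl

lemma coefAt_rhoM (f : catalanMonoid (m+1)) (q : Itv m) :
    coefAt k q (rhoM k f) = if cond f.1 q.1.1.1 q.1.2.1 then 1 else 0 := rfl

lemma span_Emat (M : IncAlg m k) : M = ∑ p : Itv m, coefAt k p M • Emat k p := by
  apply Subtype.ext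
  have hcoe : ((∑ p : Itv m, coefAt k p M • Emat k p : IncAlg m k) : Matrix (Pn m) (Pn m) k)
      = ∑ p : Itv m, coefAt k p M • (Emat k p).1 := by
    simp
  rw [hcoe]
  funext Y X
  rw [Matrix.sum_apply]
  simp only [Matrix.smul_apply, smul_eq_mul]
  by_cases hP : Ple X.1 Y.1
  · have hs : ∑ p : Itv m, coefAt k p M * (Emat k p).1 Y X
        = coefAt k (⟨(X, Y), hP⟩ : Itv m) M * (Emat k (⟨(X, Y), hP⟩ : Itv m)).1 Y X := by
      apply Finset.sum_eq_single
      · intro q _ hq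
        rw [Emat_apply, if_neg, mul_zero]
        rintro ⟨h1, h2⟩
        exact hq (Subtype.ext (Prod.ext h2.symm h1.symm))
      · intro h; exact absurd (Finset.mem_univ _) h
    rw [hs, Emat_apply, if_pos ⟨rfl, rfl⟩, mul_one, coefAt_apply]
  · have hM0 : M.1 Y X = 0 := M.2 X Y hP
    rw [hM0]
    symm
    apply Finset.sum_eq_zero
    intro q _
    rw [Emat_apply, if_neg, mul_zero]
    rintro ⟨rfl, rfl⟩
    exact hP q.2

end CatAux

set_option synthInstance.maxHeartbeats 400000 in
set_option maxHeartbeats 1000000 in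
open CatAux in
/-- For any commutative ring `k` and `n ≥ 1`, the monoid algebra `kCₙ` of the Catalan
monoid over `k` is isomorphic as a `k`-algebra to the incidence algebra
`I(P_{n-1}, k)`. -/
theorem catalan_monoidAlgebra_iso_incidence (n : ℕ) (hn : 1 ≤ n)
    (k : Type*) [CommRing k] :
    Nonempty (MonoidAlgebra k (catalanMonoid n) ≃ₐ[k] IncAlg (n-1) k) := by
  obtain ⟨m, rfl⟩ : ∃ m, n = m + 1 := ⟨n - 1, by omega⟩
  show Nonempty (MonoidAlgebra k (catalanMonoid (m+1)) ≃ₐ[k] IncAlg m k)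
  classical
  set φ := (MonoidAlgebra.lift k (IncAlg m k) (catalanMonoid (m+1))) (rhoM k) with hφdef
  -- Surjectivity: every matrix unit is in the range, by strong induction on the weight
  have hErange : ∀ N : ℕ, ∀ p : Itv m, wt p.1.1.1 = N →
      Emat k p ∈ LinearMap.range φ.toLinearMap := by
    intro N
    induction N using Nat.strong_induction_on with
    | _ N IH =>
      intro p hN
      have hkey : (rhoM k (gamM p) : IncAlg m k) = ∑ q : Itv m,
          (if cond (gamM (m := m) p).1 q.1.1.1 q.1.2.1 then (1:k) else 0) • Emat k q := by
        conv_lhs => rw [span_Emat k (rhoM k (gamM p))]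
        exact Finset.sum_congr rfl fun q _ => by rw [coefAt_rhoM]
      have hcondp : cond (gamM (m := m) p).1 p.1.1.1 p.1.2.1 := cond_gam p.1.1.2 p.2
      have hEp : Emat k p = φ (MonoidAlgebra.of k (catalanMonoid (m+1)) (gamM p))
          - ∑ q ∈ Finset.univ.erase p,
              (if cond (gamM (m := m) p).1 q.1.1.1 q.1.2.1 then (1:k) else 0) • Emat k q := by
        rw [hφdef, MonoidAlgebra.lift_of, hkey,
          ← Finset.add_sum_erase _ _ (Finset.mem_univ p), if_pos hcondp, one_smul]
        abel
      rw [hEp]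
      apply Submodule.sub_mem
      · exact ⟨_, rfl⟩
      · apply Submodule.sum_mem
        intro q hq
        by_cases hc : cond (gamM (m := m) p).1 q.1.1.1 q.1.2.1
        · rw [if_pos hc]
          apply Submodule.smul_mem
          apply IH (wt q.1.1.1) _ q rfl
          rw [← hN]
          exact tri p.1.1.2 p.1.2.2 p.2 q.1.2.2 hc
            (fun hh => (Finset.mem_erase.1 hq).1 (itv_ext hh.1 hh.2))
        · rw [if_neg hc, zero_smul]
          exact Submodule.zero_mem _
  have hsurj : Function.Surjective φ := by
    intro M
    have h1 : (∑ p : Itv m, coefAt k p M • Emat k p) ∈ LinearMap.range φ.toLinearMap := by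
      apply Submodule.sum_mem
      intro p _
      exact Submodule.smul_mem _ _ (hErange (wt p.1.1.1) p rfl)
    rw [← span_Emat k M] at h1
    obtain ⟨a, ha⟩ := h1
    exact ⟨a, ha⟩
  have hinj : Function.Injective φ := by
    rw [injective_iff_map_eq_zero]
    intro a ha
    by_contra hne
    have hsupp : a.coeff.support.Nonempty :=
        Finsupp.support_nonempty_iff.2 (fun h => hne (MonoidAlgebra.coeff_eq_zero.1 h))
    have hbij : Function.Bijective (gamM (m := m)) := ⟨gamM_injective, gamM_surjective⟩
    set e := Equiv.ofBijective _ hbij with he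
    have hTne : (a.coeff.support.image e.symm).Nonempty := hsupp.image _
    obtain ⟨p₀, hp₀, hmax⟩ :=
      Finset.exists_max_image (a.coeff.support.image e.symm) (fun p => wt p.1.1.1) hTne
    obtain ⟨f₀, hf₀, hef₀⟩ := Finset.mem_image.1 hp₀
    have hg₀ : gamM p₀ = f₀ := by
      rw [← hef₀]; exact e.apply_symm_apply f₀
    have hφa : coefAt k p₀ (φ a)
        = ∑ f ∈ a.coeff.support, a.coeff f * (if cond f.1 p₀.1.1.1 p₀.1.2.1 then 1 else 0) := by
      rw [hφdef, MonoidAlgebra.lift_apply, map_finsuppSum, Finsupp.sum]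
      apply Finset.sum_congr rfl
      intro f _
      rw [LinearMap.map_smul, coefAt_rhoM, smul_eq_mul]
    have hval : coefAt k p₀ (φ a) = a.coeff f₀ := by
      rw [hφa]
      rw [Finset.sum_eq_single f₀]
      · have hcp : CatAux.cond (gamM (m := m) p₀).1 p₀.1.1.1 p₀.1.2.1 :=
          cond_gam p₀.1.1.2 p₀.2
        rw [← hg₀, if_pos hcp, mul_one]
      · intro f hf hfne
        rw [if_neg, mul_zero]
        intro hc
        set q := e.symm f with hqdef
        have hgq : gamM q = f := e.apply_symm_apply f
        have hc' : cond (gamM (m := m) q).1 p₀.1.1.1 p₀.1.2.1 := by rw [hgq]; exact hc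
        have hwle : wt q.1.1.1 ≤ wt p₀.1.1.1 :=
          hmax q (Finset.mem_image_of_mem _ hf)
        by_cases hcc : p₀.1.1.1 = q.1.1.1 ∧ p₀.1.2.1 = q.1.2.1
        · exact hfne (by rw [← hgq, ← hg₀, itv_ext hcc.1 hcc.2])
        · have := tri q.1.1.2 q.1.2.2 q.2 p₀.1.2.2 hc' hcc
          omega
      · intro h
        rw [Finsupp.notMem_support_iff.1 h, zero_mul]
    rw [ha, (coefAt k p₀).map_zero] at hval
    exact (Finsupp.mem_support_iff.1 hf₀) hval.symm
  exact ⟨AlgEquiv.ofBijective φ ⟨hinj, hsurj⟩⟩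
end
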